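/- Let G = (V,E) be a locally finite graph, let A ⊆ V, let p > 0, and let μ₀, μ₁, …, μ_t be a sequence of mass distributions on G such that for every i ∈ {1,…,t}, μ_i = T_{v_i}^{m_i} μ_{i−1} is obtained from μ_{i−1} by a toppling move at a vertex v_i ∈ A. Then N_p(G, A, μ_t) ≤ N_p(G, A, μ₀). -/
import Mathlib


open scoped Classical ENNReal

noncomputable section

variable {V : Type*}

/-- A mass distribution: a nonnegative, finitely supported function on the vertices. -/
def IsMassDist (μ : V → ℝ) : Prop :=
  (∀ v, 0 ≤ μ v) ∧ (Function.support μ).Finite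

/-- The unit point mass at a vertex `o`. -/
def pointMass (o : V) : V → ℝ := fun u => if u = o then 1 else 0

/-- The result of toppling mass `m` at the vertex `v`: remove mass `m` from `v` and
distribute it equally among the neighbors of `v`. -/
def topple (G : SimpleGraph V) [G.LocallyFinite] (μ : V → ℝ) (v : V) (m : ℝ) : V → ℝ :=
  fun u => μ u - (if u = v then m else 0) + (if G.Adj v u then m / (G.degree v : ℝ) else 0)

/-- `ToppleSeq G μ₀ t μ₁` : there is a sequence of `t` valid toppling moves
taking `μ₀` to `μ₁`. -/
def ToppleSeq (G : SimpleGraph V) [G.LocallyFinite] (μ₀ : V → ℝ) (t : ℕ) (μ₁ : V → ℝ) : Prop :=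
  ∃ μs : ℕ → V → ℝ, μs 0 = μ₀ ∧ μs t = μ₁ ∧
    ∀ i < t, ∃ v m, 0 < m ∧ m ≤ μs i v ∧ μs (i + 1) = topple G (μs i) v m

/-- `CanTransport G A p μ₀ t` : starting from `μ₀` there are `t` toppling moves after which
the total mass outside of `A` is at least `p`. -/
def CanTransport (G : SimpleGraph V) [G.LocallyFinite] (A : Set V) (p : ℝ)
    (μ₀ : V → ℝ) (t : ℕ) : Prop :=
  ∃ μ₁ : V → ℝ, ToppleSeq G μ₀ t μ₁ ∧ p ≤ ∑' v : {v : V // v ∉ A}, μ₁ v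

/-- The open ball of radius `n` around `o` in the graph distance. -/
def gball (G : SimpleGraph V) (o : V) (n : ℕ) : Set V := {u | G.dist o u < n}


/-- `minTopples G A p μ₀` : the minimum number of toppling moves needed to transport mass `p`
outside of the set `A`, starting from the mass distribution `μ₀` (with value `⊤` if this is
impossible). -/
def minTopples (G : SimpleGraph V) [G.LocallyFinite] (A : Set V) (p : ℝ)
    (μ₀ : V → ℝ) : ℕ∞ :=
  sInf {n : ℕ∞ | ∃ t : ℕ, n = (t : ℕ∞) ∧ CanTransport G A p μ₀ t}

/- ### Auxiliary lemmas -/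

section Aux

variable (G : SimpleGraph V) [G.LocallyFinite]

lemma topple_self (μ : V → ℝ) (x : V) (a : ℝ) : topple G μ x a x = μ x - a := by
  simp [topple, SimpleGraph.irrefl]

lemma isMassDist_topple {μ : V → ℝ} (hμ : IsMassDist μ) {v : V} {m : ℝ}
    (hm : 0 ≤ m) (hmv : m ≤ μ v) : IsMassDist (topple G μ v m) := by
  constructor
  · intro u
    by_cases huv : u = v
    · subst huv
      rw [topple_self]
      linarith
    · have h1 : (0:ℝ) ≤ if G.Adj v u then m / (G.degree v : ℝ) else 0 := by positivity
      simp only [topple, if_neg huv]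
      have := hμ.1 u; linarith
  · apply Set.Finite.subset
      (hμ.2.union ((Set.finite_singleton v).union (Set.toFinite (G.neighborSet v))))
    intro u hu
    simp only [Function.mem_support, topple] at hu
    by_cases huv : u = v
    · exact Or.inr (Or.inl huv)
    by_cases hadj : G.Adj v u
    · exact Or.inr (Or.inr hadj)
    · left
      simp only [if_neg huv, if_neg hadj] at hu
      simpa using hu

lemma topple_comm (μ : V → ℝ) (x y : V) (a b : ℝ) :
    topple G (topple G μ x a) y b = topple G (topple G μ y b) x a := by
  funext u; simp only [topple]; ring

lemma topple_topple_same (μ : V → ℝ) (x : V) (a b : ℝ) :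
    topple G (topple G μ x a) x b = topple G μ x (a + b) := by
  funext u; simp only [topple]; split_ifs <;> ring

lemma topple_zero (μ : V → ℝ) (x : V) : topple G μ x 0 = μ := by
  funext u; simp [topple]

lemma le_topple_of_ne (μ : V → ℝ) {x u : V} (hux : u ≠ x) {a : ℝ} (ha : 0 ≤ a) :
    μ u ≤ topple G μ x a u := by
  have h1 : (0:ℝ) ≤ if G.Adj x u then a / (G.degree x : ℝ) else 0 := by positivity
  simp only [topple, if_neg hux]
  linarith

lemma summable_restrict {f : V → ℝ} (hf : (Function.support f).Finite) (A : Set V) :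
    Summable (fun v : {v : V // v ∉ A} => f v.val) := by
  have hfin : (Function.support (fun v : {v : V // v ∉ A} => f v.val)).Finite := by
    have hsub : Function.support (fun v : {v : V // v ∉ A} => f v.val) ⊆
        Subtype.val ⁻¹' Function.support f := fun v hv => hv
    exact Set.Finite.subset (hf.preimage (Subtype.val_injective.injOn)) hsub
  refine summable_of_ne_finset_zero (s := hfin.toFinset) (fun b hb => ?_)
  by_contra h'
  exact hb (hfin.mem_toFinset.mpr h')

lemma outside_le_topple {A : Set V} {μ : V → ℝ} (hμ : IsMassDist μ) {x : V} (hx : x ∈ A)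
    {a : ℝ} (ha : 0 ≤ a) (hax : a ≤ μ x) :
    (∑' v : {v : V // v ∉ A}, μ v) ≤ ∑' v : {v : V // v ∉ A}, topple G μ x a v := by
  have hν := isMassDist_topple G hμ ha hax
  refine Summable.tsum_le_tsum ?_ (summable_restrict hμ.2 A) (summable_restrict hν.2 A)
  rintro ⟨v, hv⟩
  exact le_topple_of_ne G μ (by rintro rfl; exact hv hx) ha

lemma canTransport_zero {A : Set V} {p : ℝ} {μ : V → ℝ}
    (h : p ≤ ∑' v : {v : V // v ∉ A}, μ v) : CanTransport G A p μ 0 :=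
  ⟨μ, ⟨fun _ => μ, rfl, rfl, fun i hi => absurd hi (Nat.not_lt_zero i)⟩, h⟩

lemma canTransport_zero_elim {A : Set V} {p : ℝ} {μ : V → ℝ}
    (h : CanTransport G A p μ 0) : p ≤ ∑' v : {v : V // v ∉ A}, μ v := by
  obtain ⟨μ₁, ⟨μs, h0, h1, _⟩, hp⟩ := h
  rw [← h1, h0] at hp
  exact hp

lemma canTransport_tail {A : Set V} {p : ℝ} {μ : V → ℝ} {k : ℕ}
    (h : CanTransport G A p μ (k + 1)) :
    ∃ v m, 0 < m ∧ m ≤ μ v ∧ CanTransport G A p (topple G μ v m) k := by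
  obtain ⟨μ₁, ⟨μs, h0, h1, hs⟩, hp⟩ := h
  obtain ⟨v, m, hm, hmv, heq⟩ := hs 0 (Nat.succ_pos k)
  refine ⟨v, m, hm, by rwa [h0] at hmv, μ₁, ⟨fun i => μs (i + 1), ?_, h1, ?_⟩, hp⟩
  · show μs (0 + 1) = topple G μ v m
    rw [heq, h0]
  · intro i hi
    exact hs (i + 1) (by omega)

lemma canTransport_prepend {A : Set V} {p : ℝ} {ν : V → ℝ} {k : ℕ} {v : V} {m : ℝ}
    (hm : 0 < m) (hmv : m ≤ ν v)
    (h : CanTransport G A p (topple G ν v m) k) : CanTransport G A p ν (k + 1) := by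
  obtain ⟨μ₁, ⟨μs, h0, h1, hs⟩, hp⟩ := h
  refine ⟨μ₁, ⟨fun i => if i = 0 then ν else μs (i - 1), by simp, by simp [h1], ?_⟩, hp⟩
  intro i hi
  by_cases hio : i = 0
  · subst hio
    exact ⟨v, m, hm, hmv, by simp [h0]⟩
  · obtain ⟨j, rfl⟩ := Nat.exists_eq_succ_of_ne_zero hio
    obtain ⟨w, mm, hw1, hw2, hw3⟩ := hs j (by omega)
    exact ⟨w, mm, hw1, hw2, by simpa using hw3⟩

/-- **Single smoothing move** (Florescu–Peres–Rácz, Lemma 3.1).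
Toppling a vertex of `A` can only decrease the minimum number of moves. -/
lemma smoothing_one {A : Set V} {p : ℝ} :
    ∀ N : ℕ, ∀ μ : V → ℝ, IsMassDist μ → ∀ x ∈ A, ∀ a : ℝ, 0 < a → a ≤ μ x →
      CanTransport G A p μ N → ∃ k ≤ N, CanTransport G A p (topple G μ x a) k := by
  intro N
  induction N with
  | zero =>
    intro μ hμ x hx a ha hax h
    exact ⟨0, le_refl 0, canTransport_zero G
      (le_trans (canTransport_zero_elim G h) (outside_le_topple G hμ hx ha.le hax))⟩
  | succ N ih =>
    intro μ hμ x hx a ha hax h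
    obtain ⟨y, m, hm, hmy, h1⟩ := canTransport_tail G h
    have hμ1 : IsMassDist (topple G μ y m) := isMassDist_topple G hμ hm.le hmy
    by_cases hxy : x = y
    · subst hxy
      set s := min (a + m) (μ x) with hs
      have hms : m ≤ s := le_min (by linarith) hmy
      have has : a ≤ s := le_min (by linarith) hax
      have hsμ : s ≤ μ x := min_le_right _ _
      have key1 : topple G (topple G μ x m) x (s - m) = topple G (topple G μ x a) x (s - a) := by
        rw [topple_topple_same, topple_topple_same]
        congr 1; ring
      have hstep2 : ∃ k ≤ N, CanTransport G A p (topple G (topple G μ x m) x (s - m)) k := by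
        rcases lt_or_eq_of_le hms with hlt | heq
        · refine ih (topple G μ x m) hμ1 x hx (s - m) (by linarith) ?_ h1
          rw [topple_self]; linarith
        · refine ⟨N, le_refl N, ?_⟩
          rw [show s - m = 0 by rw [heq, sub_self], topple_zero]
          exact h1
      obtain ⟨k, hk, hCk⟩ := hstep2
      rcases lt_or_eq_of_le has with hlt | heq
      · refine ⟨k + 1, by omega,
          canTransport_prepend (v := x) (m := s - a) G (by linarith) ?_ ?_⟩
        · rw [topple_self]; linarith
        · rw [← key1]; exact hCk
      · refine ⟨k, by omega, ?_⟩
        rw [show s - a = 0 by rw [heq, sub_self], topple_zero] at key1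
        rw [← key1]
        exact hCk
    · have hνy : m ≤ topple G μ x a y :=
        le_trans hmy (le_topple_of_ne G μ (fun h' => hxy h'.symm) ha.le)
      have hax1 : a ≤ topple G μ y m x :=
        le_trans hax (le_topple_of_ne G μ hxy hm.le)
      obtain ⟨k, hk, hCk⟩ := ih (topple G μ y m) hμ1 x hx a ha hax1 h1
      refine ⟨k + 1, by omega, canTransport_prepend (v := y) (m := m) G hm hνy ?_⟩
      rw [topple_comm]
      exact hCk

lemma minTopples_smooth_le {A : Set V} {p : ℝ} {μ : V → ℝ} (hμ : IsMassDist μ) {x : V}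
    (hx : x ∈ A) {a : ℝ} (ha : 0 < a) (hax : a ≤ μ x) :
    minTopples G A p (topple G μ x a) ≤ minTopples G A p μ := by
  apply le_sInf
  rintro n ⟨t, rfl, ht⟩
  obtain ⟨k, hk, hCk⟩ := smoothing_one G t μ hμ x hx a ha hax ht
  exact le_trans (sInf_le ⟨k, rfl, hCk⟩) (by exact_mod_cast hk)

lemma isMassDist_chain (μs : ℕ → V → ℝ) (h0 : IsMassDist (μs 0)) :
    ∀ n : ℕ, (∀ i < n, ∃ v m, 0 < m ∧ m ≤ μs i v ∧ μs (i + 1) = topple G (μs i) v m) →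
      IsMassDist (μs n) := by
  intro n
  induction n with
  | zero => intro _; exact h0
  | succ n ih =>
    intro h
    obtain ⟨v, m, hm, hmv, heq⟩ := h n (Nat.lt_succ_self n)
    rw [heq]
    exact isMassDist_topple G (ih fun i hi => h i (by omega)) hm.le hmv

end Aux

/-- **Smoothing corollary** (Florescu–Peres–Rácz, Corollary 3.2).
If `μ₀, μ₁, …, μ_t` is a sequence of mass distributions on a locally finite graph `G` obtained
by successive toppling moves all performed at vertices of `A`, then
`N_p(G, A, μ_t) ≤ N_p(G, A, μ₀)`. -/
theorem smoothing_seq_le {V : Type*} (G : SimpleGraph V) [G.LocallyFinite]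
    (A : Set V) (p : ℝ) (hp : 0 < p) (t : ℕ) (μs : ℕ → V → ℝ)
    (hmass : IsMassDist (μs 0))
    (hstep : ∀ i < t, ∃ v m, v ∈ A ∧ 0 < m ∧ m ≤ μs i v ∧
      μs (i + 1) = topple G (μs i) v m) :
    minTopples G A p (μs t) ≤ minTopples G A p (μs 0) := by
  induction t with
  | zero => exact le_refl _
  | succ n ih =>
    obtain ⟨v, m, hvA, hm, hmv, heq⟩ := hstep n (Nat.lt_succ_self n)
    have hmdn : IsMassDist (μs n) := by
      refine isMassDist_chain G μs hmass n (fun i hi => ?_)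
      obtain ⟨v', m', _, h1, h2, h3⟩ := hstep i (by omega)
      exact ⟨v', m', h1, h2, h3⟩
    calc minTopples G A p (μs (n + 1)) = minTopples G A p (topple G (μs n) v m) := by rw [heq]
      _ ≤ minTopples G A p (μs n) := minTopples_smooth_le G hmdn hvA hm hmv
      _ ≤ minTopples G A p (μs 0) := ih (fun i hi => hstep i (by omega))

end
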